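/- Define M : ℕ⁺ → ℚ to be the multiplicative function with M(1) = 1 and M(p^α) = 1/(α+1) - 1/α for every prime p and positive integer α. Then for every positive integer n, the sum of M(a) over all ordered pairs (a, b) of positive integers with lcm(a, b) = n equals 1 if n = 1 and equals 0 if n > 1. -/

import Mathlib

open Finset ArithmeticFunction in
/-- Lehmer: if `M` is the multiplicative function with `M(1) = 1` and
`M(p^α) = 1/(α+1) - 1/α` for every prime `p` and `α ≥ 1`, then the lcm convolution of `M`
with the constant function `1` is `I`, i.e. `Σ_{lcm(a,b)=n} M(a)` is `1` for `n = 1` and `0`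
for `n > 1`. -/
theorem lcm_convolution_M_u (M : ℕ → ℚ) (hM1 : M 1 = 1)
    (hmul : ∀ a b : ℕ, Nat.Coprime a b → M (a * b) = M a * M b)
    (hMpp : ∀ p α : ℕ, p.Prime → 0 < α →
      M (p ^ α) = 1 / ((α : ℚ) + 1) - 1 / (α : ℚ)) :
    ∀ n : ℕ, 0 < n →
      ∑ x ∈ (n.divisors ×ˢ n.divisors).filter (fun x => Nat.lcm x.1 x.2 = n), M x.1 =
        if n = 1 then 1 else 0 := by
  -- the arithmetic function associated with M
  set f : ArithmeticFunction ℚ := ⟨fun n => if n = 0 then 0 else M n, by simp⟩ with hf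
  have hfap : ∀ n : ℕ, n ≠ 0 → f n = M n := by intro n hn; simp [hf, hn]
  have hfmul : f.IsMultiplicative := by
    refine ⟨by simp [hf, hM1], ?_⟩
    intro m n hmn
    rcases eq_or_ne m 0 with rfl | hm
    · simp [hf]
    rcases eq_or_ne n 0 with rfl | hn
    · simp [hf]
    rw [hfap _ (mul_ne_zero hm hn), hfap _ hm, hfap _ hn]
    exact hmul m n hmn
  -- key: (∑_{a|n} M a) * τ(n) = 1 for n ≠ 0
  have key : ∀ n : ℕ, n ≠ 0 → (∑ a ∈ n.divisors, M a) * (n.divisors.card : ℚ) = 1 := by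
    have hg : ((f * zeta).pmul (↑(sigma 0) : ArithmeticFunction ℚ)) = (↑(zeta : ArithmeticFunction ℕ) : ArithmeticFunction ℚ) := by
      rw [IsMultiplicative.eq_iff_eq_on_prime_powers _ ((hfmul.mul isMultiplicative_zeta.natCast).pmul
        isMultiplicative_sigma.natCast) _ isMultiplicative_zeta.natCast]
      intro p i hp
      have hppow : (p : ℕ) ^ i ≠ 0 := pow_ne_zero _ hp.pos.ne'
      rw [pmul_apply, coe_mul_zeta_apply, natCoe_apply, natCoe_apply,
        sigma_zero_apply_prime_pow hp, zeta_apply_ne hppow,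
        Nat.sum_divisors_prime_pow hp]
      have hsum : ∀ k : ℕ, (∑ j ∈ range (k + 1), f (p ^ j)) = 1 / ((k : ℚ) + 1) := by
        intro k
        induction k with
        | zero => simp [hfap 1 one_ne_zero, hM1]
        | succ k ih =>
          rw [Finset.sum_range_succ, ih, hfap _ (pow_ne_zero _ hp.pos.ne'),
            hMpp p (k + 1) hp k.succ_pos]
          have h1 : ((k : ℚ) + 1) ≠ 0 := by positivity
          have h2 : ((k : ℚ) + 1 + 1) ≠ 0 := by positivity
          push_cast
          field_simp
          ring
      rw [hsum i]
      have h1 : ((i : ℚ) + 1) ≠ 0 := by positivity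
      push_cast
      field_simp
    intro n hn
    have := congrArg (fun g : ArithmeticFunction ℚ => g n) hg
    simp only [pmul_apply, coe_mul_zeta_apply, natCoe_apply, sigma_zero_apply,
      zeta_apply_ne hn, Nat.cast_one] at this
    rw [← this]
    congr 1
    exact Finset.sum_congr rfl fun a ha => (hfap a (Nat.pos_of_mem_divisors ha).ne').symm
  -- abbreviation for the lcm-convolution sum
  set H : ℕ → ℚ := fun n =>
    ∑ x ∈ (n.divisors ×ˢ n.divisors).filter (fun x => Nat.lcm x.1 x.2 = n), M x.1 with hH
  -- ∑_{d|n} H d = 1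
  have hsumH : ∀ n : ℕ, n ≠ 0 → (∑ d ∈ n.divisors, H d) = 1 := by
    intro n hn
    have hfib : (∑ d ∈ n.divisors, ∑ x ∈ (n.divisors ×ˢ n.divisors).filter
        (fun x => Nat.lcm x.1 x.2 = d), M x.1) = ∑ x ∈ n.divisors ×ˢ n.divisors, M x.1 := by
      apply Finset.sum_fiberwise_of_maps_to
      intro x hx
      rw [Finset.mem_product] at hx
      exact Nat.mem_divisors.mpr ⟨Nat.lcm_dvd (Nat.dvd_of_mem_divisors hx.1)
        (Nat.dvd_of_mem_divisors hx.2), hn⟩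
    have hloc : ∀ d ∈ n.divisors, H d = ∑ x ∈ (n.divisors ×ˢ n.divisors).filter
        (fun x => Nat.lcm x.1 x.2 = d), M x.1 := by
      intro d hd
      obtain ⟨hdn, -⟩ := Nat.mem_divisors.mp hd
      have hd0 : d ≠ 0 := (Nat.pos_of_mem_divisors hd).ne'
      rw [hH]
      refine Finset.sum_congr (Finset.ext fun x => ?_) fun _ _ => rfl
      simp only [Finset.mem_filter, Finset.mem_product, Nat.mem_divisors]
      constructor
      · rintro ⟨⟨⟨h1, -⟩, ⟨h2, -⟩⟩, h3⟩
        exact ⟨⟨⟨h1.trans hdn, hn⟩, h2.trans hdn, hn⟩, h3⟩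
      · rintro ⟨⟨⟨-, -⟩, -, -⟩, h3⟩
        exact ⟨⟨⟨h3 ▸ Nat.dvd_lcm_left _ _, hd0⟩, h3 ▸ Nat.dvd_lcm_right _ _, hd0⟩, h3⟩
    rw [Finset.sum_congr rfl hloc, hfib, Finset.sum_product]
    simp only [Finset.sum_const, nsmul_eq_mul, mul_comm]
    rw [← Finset.sum_mul]
    exact key n hn
  -- main: strong induction
  intro n
  induction n using Nat.strong_induction_on with
  | _ n ih =>
    intro hn
    rcases eq_or_ne n 1 with rfl | hn1
    · have := hsumH 1 one_ne_zero
      simp [Nat.divisors_one, hH, hM1, Finset.filter_singleton]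
    · simp only [hn1, if_false]
      have hmem : n ∈ n.divisors := Nat.mem_divisors_self n hn.ne'
      have h1mem : (1 : ℕ) ∈ n.divisors.erase n := by
        rw [Finset.mem_erase]
        exact ⟨fun h => hn1 h.symm, Nat.one_mem_divisors.mpr hn.ne'⟩
      have hsplit := hsumH n hn.ne'
      rw [← Finset.add_sum_erase _ _ hmem] at hsplit
      have herase : (∑ d ∈ n.divisors.erase n, H d) = 1 := by
        rw [← Finset.add_sum_erase _ _ h1mem]
        have hH1 : H 1 = 1 := by
          simp [hH, Nat.divisors_one, hM1, Finset.filter_singleton]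
        have hrest : (∑ d ∈ (n.divisors.erase n).erase 1, H d) = 0 := by
          apply Finset.sum_eq_zero
          intro d hd
          rw [Finset.mem_erase, Finset.mem_erase] at hd
          obtain ⟨hd1, hdn, hdmem⟩ := hd
          have hdlt : d < n := Nat.lt_of_le_of_ne
            (Nat.le_of_dvd hn (Nat.dvd_of_mem_divisors hdmem)) hdn
          have := ih d hdlt (Nat.pos_of_mem_divisors hdmem)
          simpa [hH, hd1] using this
        rw [hH1, hrest, add_zero]
      have hfin : H n = 0 := by linarith [hsplit, herase]
      simpa [hH] using hfin
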